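/- Let N be a finite set with |N| ≥ 3, let B be a min-balanced set system on N with |B| ≥ 3 and let Z ∈ B. Then Y := N\Z is not in B, and the system S := (B\{Z}) ∪ {Y} is purely min-semi-balanced on N with Y the exceptional set within S. -/

import Mathlib

open Finset

variable {α : Type*} [Fintype α] [DecidableEq α]

/-- Incidence (0/1 indicator) vector of a subset `S` of the player set. -/
def chi (S : Finset α) : α → ℝ := fun i => if i ∈ S then 1 else 0

/-- A non-trivial set system on `N`: nonempty, not containing `∅` nor `N`. -/
def IsNontrivial (𝒮 : Finset (Finset α)) : Prop :=
  𝒮.Nonempty ∧ ∅ ∉ 𝒮 ∧ (Finset.univ : Finset α) ∉ 𝒮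

/-- A combination is semi-conic if at most one coefficient is strictly negative. -/
def SemiConic (𝒮 : Finset (Finset α)) (lam : Finset α → ℝ) : Prop :=
  (𝒮.filter fun S => lam S < 0).card ≤ 1

/-- The combination `∑_{S ∈ 𝒮} lam S • χ_S` yields the constant vector `[r,…,r]`. -/
def CombYields (𝒮 : Finset (Finset α)) (lam : Finset α → ℝ) (r : ℝ) : Prop :=
  ∀ i : α, ∑ S ∈ 𝒮, lam S * chi S i = r

/-- A semi-balanced set system on `N`. -/
def IsSemiBalanced (𝒮 : Finset (Finset α)) : Prop :=
  IsNontrivial 𝒮 ∧ ∃ (lam : Finset α → ℝ) (r : ℝ),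
    CombYields 𝒮 lam r ∧ SemiConic 𝒮 lam ∧ ∀ S ∈ 𝒮, lam S ≠ 0

/-- A minimal semi-balanced set system on `N`. -/
def IsMinSemiBalanced (𝒮 : Finset (Finset α)) : Prop :=
  IsSemiBalanced 𝒮 ∧ ∀ 𝒞 ⊂ 𝒮, ¬ IsSemiBalanced 𝒞

/-- A balanced set system on `N`. -/
def IsBalanced (ℬ : Finset (Finset α)) : Prop :=
  IsNontrivial ℬ ∧ ∃ lam : Finset α → ℝ,
    (∀ S ∈ ℬ, 0 < lam S) ∧ ∀ i : α, ∑ S ∈ ℬ, lam S * chi S i = 1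

/-- A minimal balanced set system on `N`. -/
def IsMinBalanced (ℬ : Finset (Finset α)) : Prop :=
  IsBalanced ℬ ∧ ∀ 𝒞 ⊂ ℬ, ¬ IsBalanced 𝒞

/-- A set `T ∈ 𝒮` is exceptional within `𝒮`. -/
def IsExceptional (𝒮 : Finset (Finset α)) (T : Finset α) : Prop :=
  T ∈ 𝒮 ∧ ∃ (lam : Finset α → ℝ) (r : ℝ),
    CombYields 𝒮 lam r ∧ lam T < 0 ∧ ∀ S ∈ 𝒮, S ≠ T → 0 ≤ lam S

lemma chi_compl (Z : Finset α) (i : α) : chi (Zᶜ) i = 1 - chi Z i := by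
  by_cases h : i ∈ Z <;> simp [chi, Finset.mem_compl, h]

lemma min_balanced_indep_pos [Nonempty α] (ℬ : Finset (Finset α)) (hmin : IsMinBalanced ℬ)
    (μ : Finset α → ℝ) (h0 : ∀ i, ∑ S ∈ ℬ, μ S * chi S i = 0)
    (T : Finset α) (hT : T ∈ ℬ) (hpos : 0 < μ T) : False := by
  obtain ⟨⟨hnt, lam, hlpos, hlsum⟩, hminl⟩ := hmin
  have hPne : (ℬ.filter fun S => 0 < μ S).Nonempty := ⟨T, by simp [hT, hpos]⟩
  obtain ⟨S₀, hS₀P, hS₀min⟩ :=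
    (ℬ.filter fun S => 0 < μ S).exists_min_image (fun S => lam S / μ S) hPne
  have hS₀ℬ : S₀ ∈ ℬ := (mem_filter.mp hS₀P).1
  have hμS₀ : 0 < μ S₀ := (mem_filter.mp hS₀P).2
  set t := lam S₀ / μ S₀ with ht
  have htpos : 0 < t := div_pos (hlpos _ hS₀ℬ) hμS₀
  set lam' := fun S => lam S - t * μ S with hlam'
  have hnneg : ∀ S ∈ ℬ, 0 ≤ lam' S := by
    intro S hS
    by_cases h : 0 < μ S
    · have h1 := hS₀min S (mem_filter.mpr ⟨hS, h⟩)
      have h2 : t * μ S ≤ lam S := by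
        have := (le_div_iff₀ h).mp h1
        linarith
      simp only [hlam']; linarith
    · have : t * μ S ≤ 0 := mul_nonpos_of_nonneg_of_nonpos htpos.le (by linarith)
      have := hlpos S hS
      simp only [hlam']; linarith
  have hS₀zero : lam' S₀ = 0 := by
    simp only [hlam', ht]
    field_simp
    ring
  have hsum' : ∀ i, ∑ S ∈ ℬ, lam' S * chi S i = 1 := by
    intro i
    have h1 := hlsum i
    have h2 := h0 i
    calc ∑ S ∈ ℬ, (lam S - t * μ S) * chi S i
        = ∑ S ∈ ℬ, (lam S * chi S i - t * (μ S * chi S i)) := by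
          apply Finset.sum_congr rfl; intros; ring
      _ = (∑ S ∈ ℬ, lam S * chi S i) - t * ∑ S ∈ ℬ, μ S * chi S i := by
          rw [Finset.sum_sub_distrib, Finset.mul_sum]
      _ = 1 := by rw [h1, h2]; ring
  set 𝒞 := ℬ.filter fun S => 0 < lam' S with h𝒞
  have hsub : 𝒞 ⊆ ℬ := filter_subset _ _
  have hS₀not : S₀ ∉ 𝒞 := by simp [h𝒞, hS₀zero]
  have hss : 𝒞 ⊂ ℬ := ⟨hsub, fun hsup => hS₀not (hsup hS₀ℬ)⟩
  have hsum𝒞 : ∀ i, ∑ S ∈ 𝒞, lam' S * chi S i = 1 := by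
    intro i
    rw [Finset.sum_filter_of_ne, hsum' i]
    intro S hS hf
    rcases lt_or_eq_of_le (hnneg S hS) with h | h
    · exact h
    · exact absurd (by rw [← h]; ring) hf
  have h𝒞ne : 𝒞.Nonempty := by
    by_contra h
    rw [Finset.not_nonempty_iff_eq_empty] at h
    have := hsum𝒞 (Classical.arbitrary α)
    rw [h] at this
    simpa using this
  exact hminl 𝒞 hss ⟨⟨h𝒞ne, fun h => hnt.2.1 (hsub h), fun h => hnt.2.2 (hsub h)⟩,
    lam', fun S hS => (mem_filter.mp hS).2, hsum𝒞⟩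

lemma min_balanced_indep [Nonempty α] (ℬ : Finset (Finset α)) (hmin : IsMinBalanced ℬ)
    (μ : Finset α → ℝ) (h0 : ∀ i, ∑ S ∈ ℬ, μ S * chi S i = 0) :
    ∀ S ∈ ℬ, μ S = 0 := by
  intro S hS
  by_contra hne
  rcases lt_or_gt_of_ne hne with h | h
  · exact min_balanced_indep_pos ℬ hmin (fun S => -μ S)
      (fun i => by simp [neg_mul, Finset.sum_neg_distrib, h0 i]) S hS
      (by simpa using neg_pos.mpr h)
  · exact min_balanced_indep_pos ℬ hmin μ h0 S hS h

theorem stmt13 (h3 : 3 ≤ Fintype.card α) (ℬ : Finset (Finset α))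
    (hmin : IsMinBalanced ℬ) (hcard : 3 ≤ ℬ.card) (Z : Finset α) (hZ : Z ∈ ℬ) :
    Zᶜ ∉ ℬ ∧
    IsMinSemiBalanced (insert Zᶜ (ℬ.erase Z)) ∧
    ¬ IsBalanced (insert Zᶜ (ℬ.erase Z)) ∧
    IsExceptional (insert Zᶜ (ℬ.erase Z)) Zᶜ := by
  haveI : Nonempty α := Fintype.card_pos_iff.mp (by omega)
  obtain ⟨⟨⟨hBne, hBe, hBu⟩, lam, hlpos, hlsum⟩, hBminl⟩ := hmin
  have hmin' : IsMinBalanced ℬ := ⟨⟨⟨hBne, hBe, hBu⟩, lam, hlpos, hlsum⟩, hBminl⟩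
  have hZe : Z ≠ ∅ := fun h => hBe (h ▸ hZ)
  have hZu : Z ≠ univ := fun h => hBu (h ▸ hZ)
  -- Part 1 : Zᶜ ∉ ℬ
  have part1 : Zᶜ ∉ ℬ := by
    intro hc
    have hne : Z ≠ Zᶜ := by
      intro h
      obtain ⟨x, hx⟩ := Finset.nonempty_iff_ne_empty.mpr hZe
      have : x ∈ Zᶜ := h ▸ hx
      exact (Finset.mem_compl.mp this) hx
    have hsub : ({Z, Zᶜ} : Finset (Finset α)) ⊆ ℬ := by
      intro S hS
      rcases Finset.mem_insert.mp hS with h | h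
      · exact h ▸ hZ
      · exact (Finset.mem_singleton.mp h) ▸ hc
    have hcard2 : ({Z, Zᶜ} : Finset (Finset α)).card = 2 := Finset.card_pair hne
    have hss : ({Z, Zᶜ} : Finset (Finset α)) ⊂ ℬ := by
      refine ⟨hsub, fun hsup => ?_⟩
      have := Finset.card_le_card hsup
      omega
    apply hBminl _ hss
    refine ⟨⟨⟨Z, by simp⟩, ?_, ?_⟩, fun _ => 1, fun S _ => one_pos, ?_⟩
    · intro h
      rcases Finset.mem_insert.mp h with h | h
      · exact hBe ((h ▸ hZ))
      · rw [Finset.mem_singleton] at h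
        have : Z = univ := by
          have := congrArg compl h
          simpa using this.symm
        exact hZu this
    · intro h
      rcases Finset.mem_insert.mp h with h | h
      · exact hBu (h ▸ hZ)
      · rw [Finset.mem_singleton] at h
        have : Z = ∅ := by
          have := congrArg compl h
          simpa using this.symm
        exact hZe this
    · intro i
      rw [Finset.sum_pair hne, chi_compl]
      ring
  have hcne : Zᶜ ∉ ℬ.erase Z := fun h => part1 (Finset.mem_of_mem_erase h)
  set 𝒮 := insert Zᶜ (ℬ.erase Z) with h𝒮
  have hsplitB : ∀ f : Finset α → ℝ, ∑ S ∈ ℬ, f S = f Z + ∑ S ∈ ℬ.erase Z, f S :=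
    fun f => (Finset.add_sum_erase ℬ f hZ).symm
  -- nontriviality of 𝒮
  have h𝒮nt : IsNontrivial 𝒮 := by
    refine ⟨⟨Zᶜ, Finset.mem_insert_self _ _⟩, ?_, ?_⟩
    · intro h
      rcases Finset.mem_insert.mp h with h | h
      · have : Z = univ := by have := congrArg compl h; simpa using this.symm
        exact hZu this
      · exact hBe (Finset.mem_of_mem_erase h)
    · intro h
      rcases Finset.mem_insert.mp h with h | h
      · have : Z = ∅ := by have := congrArg compl h; simpa using this.symm
        exact hZe this
      · exact hBu (Finset.mem_of_mem_erase h)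
  -- witness combination for 𝒮
  set μ₀ := fun S => if S = Zᶜ then -(lam Z) else lam S with hμ₀
  have hμ₀yield : CombYields 𝒮 μ₀ (1 - lam Z) := by
    intro i
    rw [h𝒮, Finset.sum_insert hcne]
    have he2 := hlsum i
    rw [hsplitB (fun S => lam S * chi S i)] at he2
    have h1 : μ₀ Zᶜ * chi Zᶜ i = -(lam Z) * (1 - chi Z i) := by
      rw [chi_compl]; simp [hμ₀]
    have h2 : ∑ S ∈ ℬ.erase Z, μ₀ S * chi S i = ∑ S ∈ ℬ.erase Z, lam S * chi S i := by
      apply Finset.sum_congr rfl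
      intro S hS
      have : S ≠ Zᶜ := fun h => hcne (h ▸ hS)
      simp [hμ₀, this]
    rw [h1, h2]
    linarith [he2]
  have hμ₀semi : SemiConic 𝒮 μ₀ := by
    unfold SemiConic
    have : (𝒮.filter fun S => μ₀ S < 0) ⊆ {Zᶜ} := by
      intro S hS
      obtain ⟨hS𝒮, hSneg⟩ := Finset.mem_filter.mp hS
      rcases Finset.mem_insert.mp hS𝒮 with h | h
      · simp [h]
      · exfalso
        have hne : S ≠ Zᶜ := fun hh => hcne (hh ▸ h)
        have : μ₀ S = lam S := by simp [hμ₀, hne]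
        rw [this] at hSneg
        exact absurd hSneg (not_lt.mpr (hlpos S (Finset.mem_of_mem_erase h)).le)
    calc (𝒮.filter fun S => μ₀ S < 0).card ≤ ({Zᶜ} : Finset (Finset α)).card :=
          Finset.card_le_card this
      _ = 1 := Finset.card_singleton _
  have hμ₀nz : ∀ S ∈ 𝒮, μ₀ S ≠ 0 := by
    intro S hS
    rcases Finset.mem_insert.mp hS with h | h
    · subst h; simp [hμ₀]; linarith [hlpos Z hZ]
    · have hne : S ≠ Zᶜ := fun hh => hcne (hh ▸ h)
      simp [hμ₀, hne]
      exact (hlpos S (Finset.mem_of_mem_erase h)).ne'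
  have hsemi : IsSemiBalanced 𝒮 := ⟨h𝒮nt, μ₀, 1 - lam Z, hμ₀yield, hμ₀semi, hμ₀nz⟩
  -- Part 3 : not balanced
  have part3 : ¬ IsBalanced 𝒮 := by
    rintro ⟨_, ν, hνpos, hνsum⟩
    have hνZc : 0 < ν Zᶜ := hνpos Zᶜ (Finset.mem_insert_self _ _)
    set μ := fun S => (if S = Z then -(ν Zᶜ) else ν S) - (1 - ν Zᶜ) * lam S with hμ
    have h0 : ∀ i, ∑ S ∈ ℬ, μ S * chi S i = 0 := by
      intro i
      have e1 := hνsum i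
      rw [h𝒮, Finset.sum_insert hcne, chi_compl] at e1
      have e2 := hlsum i
      rw [hsplitB (fun S => lam S * chi S i)] at e2
      rw [hsplitB (fun S => μ S * chi S i)]
      have hZterm : μ Z * chi Z i = (-(ν Zᶜ) - (1 - ν Zᶜ) * lam Z) * chi Z i := by
        simp [hμ]
      have hrest : ∑ S ∈ ℬ.erase Z, μ S * chi S i
          = ∑ S ∈ ℬ.erase Z, ν S * chi S i
            - (1 - ν Zᶜ) * ∑ S ∈ ℬ.erase Z, lam S * chi S i := by
        rw [Finset.mul_sum, ← Finset.sum_sub_distrib]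
        apply Finset.sum_congr rfl
        intro S hS
        have hne : S ≠ Z := (Finset.mem_erase.mp hS).1
        have hval : μ S = ν S - (1 - ν Zᶜ) * lam S := by simp [hμ, hne]
        rw [hval]; ring
      rw [hZterm, hrest]
      linear_combination e1 - (1 - ν Zᶜ) * e2
    have hall := min_balanced_indep ℬ hmin' μ h0
    have hatZ : μ Z = 0 := hall Z hZ
    have hZval : μ Z = -(ν Zᶜ) - (1 - ν Zᶜ) * lam Z := by simp [hμ]
    rw [hZval] at hatZ
    have hlZ := hlpos Z hZ
    have hneg : 1 - ν Zᶜ < 0 := by nlinarith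
    obtain ⟨S₁, hS₁⟩ : (ℬ.erase Z).Nonempty := by
      rw [← Finset.card_pos, Finset.card_erase_of_mem hZ]; omega
    have hS₁Z : S₁ ≠ Z := (Finset.mem_erase.mp hS₁).1
    have hatS₁ : μ S₁ = 0 := hall S₁ (Finset.mem_of_mem_erase hS₁)
    have hS₁val : μ S₁ = ν S₁ - (1 - ν Zᶜ) * lam S₁ := by simp [hμ, hS₁Z]
    rw [hS₁val] at hatS₁
    have := hνpos S₁ (Finset.mem_insert_of_mem hS₁)
    have := hlpos S₁ (Finset.mem_of_mem_erase hS₁)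
    nlinarith
  -- Part 4 : minimality
  have part4 : ∀ 𝒞 ⊂ 𝒮, ¬ IsSemiBalanced 𝒞 := by
    rintro 𝒞 h𝒞 ⟨⟨h𝒞ne, _, _⟩, ν, r, hyield, _, hnz⟩
    by_cases hZc𝒞 : Zᶜ ∈ 𝒞
    · -- case Zᶜ ∈ 𝒞
      obtain ⟨W, hW𝒮, hW𝒞⟩ := Finset.exists_of_ssubset h𝒞
      have hWZc : W ≠ Zᶜ := fun h => hW𝒞 (h ▸ hZc𝒞)
      have hWer : W ∈ ℬ.erase Z := by
        rcases Finset.mem_insert.mp hW𝒮 with h | h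
        · exact absurd h hWZc
        · exact h
      have hWℬ : W ∈ ℬ := Finset.mem_of_mem_erase hWer
      have hWZ : W ≠ Z := (Finset.mem_erase.mp hWer).1
      set D := 𝒞.erase Zᶜ with hD
      have hDer : D ⊆ ℬ.erase Z := by
        intro S hS
        obtain ⟨hSne, hS𝒞⟩ := Finset.mem_erase.mp hS
        rcases Finset.mem_insert.mp (h𝒞.1 hS𝒞) with h | h
        · exact absurd h hSne
        · exact h
      have hZD : Z ∉ D := fun h => (Finset.mem_erase.mp (hDer h)).1 rfl
      set μ := fun S => (if S = Z then -(ν Zᶜ) else if S ∈ D then ν S else 0)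
        - (r - ν Zᶜ) * lam S with hμ
      have h0 : ∀ i, ∑ S ∈ ℬ, μ S * chi S i = 0 := by
        intro i
        have e1 := hyield i
        rw [← Finset.add_sum_erase 𝒞 _ hZc𝒞, chi_compl] at e1
        have e2 := hlsum i
        rw [hsplitB (fun S => lam S * chi S i)] at e2
        rw [hsplitB (fun S => μ S * chi S i)]
        have hZterm : μ Z * chi Z i = (-(ν Zᶜ) - (r - ν Zᶜ) * lam Z) * chi Z i := by
          simp [hμ]
        have hrest : ∑ S ∈ ℬ.erase Z, μ S * chi S i
            = ∑ S ∈ D, ν S * chi S i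
              - (r - ν Zᶜ) * ∑ S ∈ ℬ.erase Z, lam S * chi S i := by
          have hDs : ∑ S ∈ D, ν S * chi S i
              = ∑ S ∈ ℬ.erase Z, (if S ∈ D then ν S * chi S i else 0) := by
            rw [Finset.sum_ite_mem, Finset.inter_eq_right.mpr hDer]
          rw [Finset.mul_sum, hDs, ← Finset.sum_sub_distrib]
          apply Finset.sum_congr rfl
          intro S hS
          have hne : S ≠ Z := (Finset.mem_erase.mp hS).1
          have hval : μ S = (if S ∈ D then ν S else 0) - (r - ν Zᶜ) * lam S := by
            simp [hμ, hne]
          rw [hval]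
          by_cases hd : S ∈ D <;> simp [hd] <;> ring
        rw [hZterm, hrest]
        linear_combination e1 - (r - ν Zᶜ) * e2
      have hall := min_balanced_indep ℬ hmin' μ h0
      have hWD : W ∉ D := fun h => hW𝒞 (Finset.mem_of_mem_erase h)
      have hatW : μ W = 0 := hall W hWℬ
      have hWval : μ W = -((r - ν Zᶜ) * lam W) := by simp [hμ, hWZ, hWD]
      rw [hWval, neg_eq_zero] at hatW
      have hr : r = ν Zᶜ := by
        rcases mul_eq_zero.mp hatW with h | h
        · linarith
        · exact absurd h (hlpos W hWℬ).ne'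
      have hatZ : μ Z = 0 := hall Z hZ
      have hZval : μ Z = -(ν Zᶜ) - (r - ν Zᶜ) * lam Z := by simp [hμ]
      rw [hZval, hr] at hatZ
      exact hnz Zᶜ hZc𝒞 (by linarith)
    · -- case Zᶜ ∉ 𝒞
      have h𝒞er : 𝒞 ⊆ ℬ.erase Z := by
        intro S hS
        rcases Finset.mem_insert.mp (h𝒞.1 hS) with h | h
        · exact absurd (h ▸ hS) hZc𝒞
        · exact h
      have hZ𝒞 : Z ∉ 𝒞 := fun h => (Finset.mem_erase.mp (h𝒞er h)).1 rfl
      have h𝒞ℬ : 𝒞 ⊆ ℬ := h𝒞er.trans (Finset.erase_subset _ _)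
      set μ := fun S => (if S ∈ 𝒞 then ν S else 0) - r * lam S with hμ
      have h0 : ∀ i, ∑ S ∈ ℬ, μ S * chi S i = 0 := by
        intro i
        have e1 := hyield i
        have e2 := hlsum i
        have hsplit : ∑ S ∈ ℬ, μ S * chi S i
            = ∑ S ∈ 𝒞, ν S * chi S i - r * ∑ S ∈ ℬ, lam S * chi S i := by
          have h𝒞s : ∑ S ∈ 𝒞, ν S * chi S i
              = ∑ S ∈ ℬ, (if S ∈ 𝒞 then ν S * chi S i else 0) := by
            rw [Finset.sum_ite_mem, Finset.inter_eq_right.mpr h𝒞ℬ]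
          rw [Finset.mul_sum, h𝒞s, ← Finset.sum_sub_distrib]
          apply Finset.sum_congr rfl
          intro S hS
          have hval : μ S = (if S ∈ 𝒞 then ν S else 0) - r * lam S := by simp [hμ]
          rw [hval]
          by_cases hc : S ∈ 𝒞 <;> simp [hc] <;> ring
        rw [hsplit, e1, e2]
        ring
      have hall := min_balanced_indep ℬ hmin' μ h0
      have hatZ : μ Z = 0 := hall Z hZ
      have hZval : μ Z = -(r * lam Z) := by simp [hμ, hZ𝒞]
      rw [hZval, neg_eq_zero] at hatZ
      have hr : r = 0 := by
        rcases mul_eq_zero.mp hatZ with h | h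
        · exact h
        · exact absurd h (hlpos Z hZ).ne'
      obtain ⟨W, hW⟩ := h𝒞ne
      have hatW : μ W = 0 := hall W (h𝒞ℬ hW)
      have hWval : μ W = ν W - r * lam W := by simp [hμ, hW]
      rw [hWval, hr] at hatW
      exact hnz W hW (by linarith)
  refine ⟨part1, ⟨hsemi, part4⟩, part3, Finset.mem_insert_self _ _, μ₀, 1 - lam Z,
    hμ₀yield, ?_, ?_⟩
  · simp [hμ₀]; linarith [hlpos Z hZ]
  · intro S hS hSne
    rcases Finset.mem_insert.mp hS with h | h
    · exact absurd h hSne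
    · simp [hμ₀, hSne]
      exact (hlpos S (Finset.mem_of_mem_erase h)).le
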